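/- The function η ↦ mmse_u(η) = ∫_ℝ (1 − tanh x)²·N(x; η, η) dx is monotonically decreasing on (0, ∞): for all 0 < η₁ < η₂, mmse_u(η₂) ≤ mmse_u(η₁). -/

import Mathlib

/-- The real Gaussian density with mean `μ` and variance `v`. -/
noncomputable def gaussPdf (μ v x : ℝ) : ℝ :=
  (Real.sqrt (2 * Real.pi * v))⁻¹ * Real.exp (-(x - μ) ^ 2 / (2 * v))

/-- The MMSE function of the uncoded scalar BPSK denoiser. -/
noncomputable def mmseU (η : ℝ) : ℝ := ∫ x : ℝ, (1 - Real.tanh x) ^ 2 * gaussPdf η η x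

open MeasureTheory Real

lemma gaussPdf_nonneg (m v x : ℝ) : 0 ≤ gaussPdf m v x := by
  unfold gaussPdf; positivity

lemma gaussPdf_eq_pdfReal (m : ℝ) {v : ℝ} (hv : 0 ≤ v) :
    gaussPdf m v = ProbabilityTheory.gaussianPDFReal m ⟨v, hv⟩ := rfl

lemma integrable_gaussPdf (m : ℝ) {v : ℝ} (hv : 0 < v) : Integrable (gaussPdf m v) := by
  rw [gaussPdf_eq_pdfReal m hv.le]
  exact ProbabilityTheory.integrable_gaussianPDFReal m _

lemma integral_gaussPdf (m : ℝ) {v : ℝ} (hv : 0 < v) : ∫ x, gaussPdf m v x = 1 := by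
  rw [gaussPdf_eq_pdfReal m hv.le]
  exact ProbabilityTheory.integral_gaussianPDFReal_eq_one m (by
    intro h
    exact hv.ne' (congrArg NNReal.toReal h))

lemma continuous_tanh : Continuous Real.tanh := by
  have : Real.tanh = fun x => Real.sinh x / Real.cosh x := funext fun x => Real.tanh_eq_sinh_div_cosh x
  rw [this]
  exact Real.continuous_sinh.div Real.continuous_cosh fun x => (Real.cosh_pos x).ne'

lemma abs_tanh_le_one (x : ℝ) : |Real.tanh x| ≤ 1 := by
  have h1 := Real.exp_pos x
  have h2 := Real.exp_pos (-x)
  rw [Real.tanh_eq_sinh_div_cosh, Real.sinh_eq, Real.cosh_eq, abs_div,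
    abs_of_pos (by positivity : (0:ℝ) < (Real.exp x + Real.exp (-x)) / 2),
    div_le_one (by positivity)]
  rw [abs_le]
  constructor <;> nlinarith

lemma integrable_bdd_mul_gaussPdf {g : ℝ → ℝ} (hg : Continuous g) {C : ℝ}
    (hC : ∀ y, |g y| ≤ C) (m : ℝ) {v : ℝ} (hv : 0 < v) :
    Integrable (fun y => g y * gaussPdf m v y) :=
  (integrable_gaussPdf m hv).bdd_mul hg.aestronglyMeasurable (Filter.Eventually.of_forall fun y => by
    simpa using hC y)

lemma gaussPdf_neg (m v x : ℝ) : gaussPdf m v (-x) = gaussPdf (-m) v x := by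
  unfold gaussPdf
  congr 2
  ring

lemma gaussPdf_reflect {η : ℝ} (hη : 0 < η) (x : ℝ) :
    gaussPdf η η (-x) = Real.exp (-(2 * x)) * gaussPdf η η x := by
  unfold gaussPdf
  rw [mul_left_comm, ← Real.exp_add]
  congr 2
  field_simp
  ring

lemma sym_integral {η : ℝ} (hη : 0 < η) (Φ : ℝ → ℝ) :
    ∫ x, Φ x * gaussPdf η η x = ∫ x, Φ (-x) * Real.exp (-(2 * x)) * gaussPdf η η x := by
  calc ∫ x, Φ x * gaussPdf η η x
      = ∫ x, Φ (-x) * gaussPdf η η (-x) := (integral_neg_eq_self _ _).symm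
    _ = ∫ x, Φ (-x) * Real.exp (-(2 * x)) * gaussPdf η η x := by
        congr 1; ext x; rw [gaussPdf_reflect hη x]; ring

lemma one_sub_exp_eq_tanh (x : ℝ) :
    1 - Real.exp (-(2 * x)) = Real.tanh x * (1 + Real.exp (-(2 * x))) := by
  have hx1 : Real.exp x * Real.exp (-x) = 1 := by
    rw [← Real.exp_add]; simp
  have he : Real.exp (-(2 * x)) = Real.exp (-x) * Real.exp (-x) := by
    rw [← Real.exp_add]; ring_nf
  rw [Real.tanh_eq_sinh_div_cosh, Real.sinh_eq, Real.cosh_eq, he]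
  have hc : Real.exp x + Real.exp (-x) ≠ 0 := by positivity
  field_simp
  linear_combination (-2 * Real.exp (-x)) * hx1

lemma gauss_mul_gauss {η₁ η₂ : ℝ} (h₁ : 0 < η₁) (h₁₂ : η₁ < η₂) (x y : ℝ) :
    gaussPdf η₂ η₂ x * gaussPdf (η₁ / η₂ * x) (η₁ * (η₂ - η₁) / η₂) y
      = gaussPdf η₁ η₁ y * gaussPdf ((η₂ - η₁) + y) (η₂ - η₁) x := by
  have h₂ : 0 < η₂ := h₁.trans h₁₂
  have hd : 0 < η₂ - η₁ := sub_pos.mpr h₁₂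
  have hs : 0 < η₁ * (η₂ - η₁) / η₂ := by positivity
  unfold gaussPdf
  rw [mul_mul_mul_comm, mul_mul_mul_comm ((Real.sqrt (2 * Real.pi * η₁))⁻¹),
    ← Real.exp_add, ← Real.exp_add, ← mul_inv, ← mul_inv,
    ← Real.sqrt_mul (by positivity), ← Real.sqrt_mul (by positivity)]
  congr 2
  · congr 1
    field_simp
  · field_simp
    ring

lemma gauss_conv {η₁ η₂ : ℝ} (h₁ : 0 < η₁) (h₁₂ : η₁ < η₂) (y : ℝ) :
    ∫ x, gaussPdf η₂ η₂ x * gaussPdf (η₁ / η₂ * x) (η₁ * (η₂ - η₁) / η₂) y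
      = gaussPdf η₁ η₁ y := by
  have hd : 0 < η₂ - η₁ := sub_pos.mpr h₁₂
  simp_rw [gauss_mul_gauss h₁ h₁₂]
  rw [MeasureTheory.integral_const_mul, integral_gaussPdf _ hd, mul_one]

lemma sq_one_sub_tanh_le (y : ℝ) : |(1 - Real.tanh y) ^ 2| ≤ 4 := by
  have h := abs_le.mp (abs_tanh_le_one y)
  rw [abs_of_nonneg (sq_nonneg _)]
  nlinarith [h.1, h.2]

lemma sq_one_add_tanh_le (y : ℝ) : |(1 + Real.tanh y) ^ 2| ≤ 4 := by
  have h := abs_le.mp (abs_tanh_le_one y)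
  rw [abs_of_nonneg (sq_nonneg _)]
  nlinarith [h.1, h.2]

lemma continuous_one_sub_tanh_sq : Continuous fun y : ℝ => (1 - Real.tanh y) ^ 2 :=
  (continuous_const.sub continuous_tanh).pow 2

/-- The inner conditional expectation integral. -/
noncomputable def Iint (η₁ η₂ x : ℝ) : ℝ :=
  ∫ y, (1 - Real.tanh y) ^ 2 * gaussPdf (η₁ / η₂ * x) (η₁ * (η₂ - η₁) / η₂) y

lemma hFint_aux {η₁ η₂ : ℝ} (h₁ : 0 < η₁) (h₁₂ : η₁ < η₂) :
    Integrable (Function.uncurry fun x y => (1 - Real.tanh y) ^ 2 *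
      (gaussPdf η₂ η₂ x * gaussPdf (η₁ / η₂ * x) (η₁ * (η₂ - η₁) / η₂) y))
      ((volume : Measure ℝ).prod (volume : Measure ℝ)) := by
  have h₂ : 0 < η₂ := h₁.trans h₁₂
  have hd : 0 < η₂ - η₁ := sub_pos.mpr h₁₂
  have hs : 0 < η₁ * (η₂ - η₁) / η₂ := by positivity
  have hFcont : Continuous (Function.uncurry fun x y => (1 - Real.tanh y) ^ 2 *
      (gaussPdf η₂ η₂ x * gaussPdf (η₁ / η₂ * x) (η₁ * (η₂ - η₁) / η₂) y)) := by
    have h : Continuous (fun q : ℝ × ℝ => (1 - Real.tanh q.2) ^ 2 *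
        (gaussPdf η₂ η₂ q.1 * gaussPdf (η₁ / η₂ * q.1) (η₁ * (η₂ - η₁) / η₂) q.2)) := by
      unfold gaussPdf
      have ht : Continuous fun q : ℝ × ℝ => (1 - Real.tanh q.2) ^ 2 :=
        continuous_one_sub_tanh_sq.comp continuous_snd
      fun_prop [continuous_tanh]
    exact h
  rw [MeasureTheory.integrable_prod_iff hFcont.aestronglyMeasurable]
  constructor
  · refine Filter.Eventually.of_forall fun x => ?_
    simp only [Function.uncurry]
    have hrw : (fun y => (1 - Real.tanh y) ^ 2 *
        (gaussPdf η₂ η₂ x * gaussPdf (η₁ / η₂ * x) (η₁ * (η₂ - η₁) / η₂) y))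
        = fun y => gaussPdf η₂ η₂ x *
          ((1 - Real.tanh y) ^ 2 * gaussPdf (η₁ / η₂ * x) (η₁ * (η₂ - η₁) / η₂) y) := by
      funext y; ring
    rw [hrw]
    exact (integrable_bdd_mul_gaussPdf continuous_one_sub_tanh_sq sq_one_sub_tanh_le _ hs).const_mul _
  · refine Integrable.mono' ((integrable_gaussPdf η₂ h₂).const_mul 4)
      (hFcont.aestronglyMeasurable.norm.integral_prod_right')
      (Filter.Eventually.of_forall fun x => ?_)
    have hnn : 0 ≤ ∫ y, ‖Function.uncurry (fun x y => (1 - Real.tanh y) ^ 2 *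
        (gaussPdf η₂ η₂ x * gaussPdf (η₁ / η₂ * x) (η₁ * (η₂ - η₁) / η₂) y)) (x, y)‖ :=
      integral_nonneg fun y => norm_nonneg _
    rw [Real.norm_eq_abs, abs_of_nonneg hnn]
    calc ∫ y, ‖Function.uncurry (fun x y => (1 - Real.tanh y) ^ 2 *
          (gaussPdf η₂ η₂ x * gaussPdf (η₁ / η₂ * x) (η₁ * (η₂ - η₁) / η₂) y)) (x, y)‖
        ≤ ∫ y, 4 * (gaussPdf η₂ η₂ x * gaussPdf (η₁ / η₂ * x) (η₁ * (η₂ - η₁) / η₂) y) := by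
          refine integral_mono_of_nonneg (Filter.Eventually.of_forall fun y => norm_nonneg _)
            (((integrable_gaussPdf _ hs).const_mul _).const_mul _)
            (Filter.Eventually.of_forall fun y => ?_)
          simp only [Function.uncurry_apply_pair, Real.norm_eq_abs, abs_mul]
          rw [abs_of_nonneg (gaussPdf_nonneg η₂ η₂ x), abs_of_nonneg (gaussPdf_nonneg _ _ y)]
          exact mul_le_mul_of_nonneg_right (sq_one_sub_tanh_le y)
            (mul_nonneg (gaussPdf_nonneg _ _ _) (gaussPdf_nonneg _ _ _))
      _ = 4 * gaussPdf η₂ η₂ x := by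
          rw [MeasureTheory.integral_const_mul, MeasureTheory.integral_const_mul,
            integral_gaussPdf _ hs, mul_one]

lemma mmseU_fubini {η₁ η₂ : ℝ} (h₁ : 0 < η₁) (h₁₂ : η₁ < η₂) :
    mmseU η₁ = ∫ x, Iint η₁ η₂ x * gaussPdf η₂ η₂ x := by
  calc mmseU η₁ = ∫ y, (1 - Real.tanh y) ^ 2 * gaussPdf η₁ η₁ y := rfl
    _ = ∫ y, ∫ x, (1 - Real.tanh y) ^ 2 *
          (gaussPdf η₂ η₂ x * gaussPdf (η₁ / η₂ * x) (η₁ * (η₂ - η₁) / η₂) y) := by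
        congr 1; ext y
        rw [← gauss_conv h₁ h₁₂ y, ← MeasureTheory.integral_const_mul]
    _ = ∫ x, ∫ y, (1 - Real.tanh y) ^ 2 *
          (gaussPdf η₂ η₂ x * gaussPdf (η₁ / η₂ * x) (η₁ * (η₂ - η₁) / η₂) y) :=
        (MeasureTheory.integral_integral_swap (hFint_aux h₁ h₁₂)).symm
    _ = ∫ x, Iint η₁ η₂ x * gaussPdf η₂ η₂ x := by
        congr 1; ext x
        unfold Iint
        rw [show (fun y => (1 - Real.tanh y) ^ 2 *
            (gaussPdf η₂ η₂ x * gaussPdf (η₁ / η₂ * x) (η₁ * (η₂ - η₁) / η₂) y))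
            = fun y => gaussPdf η₂ η₂ x *
              ((1 - Real.tanh y) ^ 2 * gaussPdf (η₁ / η₂ * x) (η₁ * (η₂ - η₁) / η₂) y)
          from funext fun y => by ring]
        rw [MeasureTheory.integral_const_mul, mul_comm]

lemma integrable_Iint_mul {η₁ η₂ : ℝ} (h₁ : 0 < η₁) (h₁₂ : η₁ < η₂) :
    Integrable (fun x => Iint η₁ η₂ x * gaussPdf η₂ η₂ x) := by
  refine ((hFint_aux h₁ h₁₂).integral_prod_left).congr
    (Filter.Eventually.of_forall fun x => ?_)
  simp only [Function.uncurry]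
  unfold Iint
  rw [show (fun y => (1 - Real.tanh y) ^ 2 *
      (gaussPdf η₂ η₂ x * gaussPdf (η₁ / η₂ * x) (η₁ * (η₂ - η₁) / η₂) y))
      = fun y => gaussPdf η₂ η₂ x *
        ((1 - Real.tanh y) ^ 2 * gaussPdf (η₁ / η₂ * x) (η₁ * (η₂ - η₁) / η₂) y)
    from funext fun y => by ring]
  rw [MeasureTheory.integral_const_mul, mul_comm]

lemma core_ineq {η₁ η₂ : ℝ} (h₁ : 0 < η₁) (h₁₂ : η₁ < η₂) (x : ℝ) :
    ((1 - Real.tanh x) ^ 2 + (1 + Real.tanh x) ^ 2 * Real.exp (-(2 * x))) / 2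
      ≤ (Iint η₁ η₂ x + Iint η₁ η₂ (-x) * Real.exp (-(2 * x))) / 2 := by
  have h₂ : 0 < η₂ := h₁.trans h₁₂
  have hs : 0 < η₁ * (η₂ - η₁) / η₂ := by
    have hd : 0 < η₂ - η₁ := sub_pos.mpr h₁₂
    positivity
  set s : ℝ := η₁ * (η₂ - η₁) / η₂
  set c : ℝ := η₁ / η₂
  have i0 : Integrable (fun y => gaussPdf (c * x) s y) := integrable_gaussPdf _ hs
  have i1 : Integrable (fun y => Real.tanh y * gaussPdf (c * x) s y) :=
    integrable_bdd_mul_gaussPdf continuous_tanh abs_tanh_le_one _ hs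
  have htb : ∀ y : ℝ, |Real.tanh y ^ 2| ≤ 1 := fun y => by
    have h := abs_le.mp (abs_tanh_le_one y)
    rw [abs_of_nonneg (sq_nonneg _)]; nlinarith [h.1, h.2]
  have i2 : Integrable (fun y => Real.tanh y ^ 2 * gaussPdf (c * x) s y) :=
    integrable_bdd_mul_gaussPdf (continuous_tanh.pow 2) htb _ hs
  have hk1 : ∫ y, gaussPdf (c * x) s y = 1 := integral_gaussPdf _ hs
  set μx : ℝ := ∫ y, Real.tanh y * gaussPdf (c * x) s y with hμ
  set νx : ℝ := ∫ y, Real.tanh y ^ 2 * gaussPdf (c * x) s y with hν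
  have hIx : Iint η₁ η₂ x = 1 - 2 * μx + νx := by
    unfold Iint
    rw [show (fun y => (1 - Real.tanh y) ^ 2 * gaussPdf (c * x) s y)
        = fun y => (gaussPdf (c * x) s y - 2 * (Real.tanh y * gaussPdf (c * x) s y))
          + Real.tanh y ^ 2 * gaussPdf (c * x) s y from funext fun y => by ring]
    have ia : Integrable (fun y => gaussPdf (c * x) s y
        - 2 * (Real.tanh y * gaussPdf (c * x) s y)) := i0.sub (i1.const_mul 2)
    have ib : Integrable (fun y => 2 * (Real.tanh y * gaussPdf (c * x) s y)) := i1.const_mul 2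
    rw [MeasureTheory.integral_add ia i2,
      MeasureTheory.integral_sub i0 ib, MeasureTheory.integral_const_mul, hk1]
  have hIneg : Iint η₁ η₂ (-x) = 1 + 2 * μx + νx := by
    unfold Iint
    have step1 : (∫ y, (1 - Real.tanh y) ^ 2 * gaussPdf (c * (-x)) s y)
        = ∫ y, (1 + Real.tanh y) ^ 2 * gaussPdf (c * x) s y := by
      calc (∫ y, (1 - Real.tanh y) ^ 2 * gaussPdf (c * (-x)) s y)
          = ∫ y, (1 - Real.tanh (-y)) ^ 2 * gaussPdf (c * (-x)) s (-y) :=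
            (integral_neg_eq_self _ _).symm
        _ = ∫ y, (1 + Real.tanh y) ^ 2 * gaussPdf (c * x) s y := by
            congr 1; ext y
            rw [Real.tanh_neg, show c * (-x) = -(c * x) from by ring, gaussPdf_neg, neg_neg]
            ring
    rw [step1]
    rw [show (fun y => (1 + Real.tanh y) ^ 2 * gaussPdf (c * x) s y)
        = fun y => (gaussPdf (c * x) s y + 2 * (Real.tanh y * gaussPdf (c * x) s y))
          + Real.tanh y ^ 2 * gaussPdf (c * x) s y from funext fun y => by ring]
    have ia : Integrable (fun y => gaussPdf (c * x) s y
        + 2 * (Real.tanh y * gaussPdf (c * x) s y)) := i0.add (i1.const_mul 2)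
    have ib : Integrable (fun y => 2 * (Real.tanh y * gaussPdf (c * x) s y)) := i1.const_mul 2
    rw [MeasureTheory.integral_add ia i2,
      MeasureTheory.integral_add i0 ib, MeasureTheory.integral_const_mul, hk1]
  have hj : μx ^ 2 ≤ νx := by
    have h0 : 0 ≤ ∫ y, (Real.tanh y - μx) ^ 2 * gaussPdf (c * x) s y :=
      integral_nonneg fun y => mul_nonneg (sq_nonneg _) (gaussPdf_nonneg _ _ _)
    have hexp : (∫ y, (Real.tanh y - μx) ^ 2 * gaussPdf (c * x) s y)
        = νx - 2 * μx * μx + μx ^ 2 := by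
      rw [show (fun y => (Real.tanh y - μx) ^ 2 * gaussPdf (c * x) s y)
          = fun y => (Real.tanh y ^ 2 * gaussPdf (c * x) s y
              - 2 * μx * (Real.tanh y * gaussPdf (c * x) s y))
            + μx ^ 2 * gaussPdf (c * x) s y from funext fun y => by ring]
      have ia : Integrable (fun y => Real.tanh y ^ 2 * gaussPdf (c * x) s y
          - 2 * μx * (Real.tanh y * gaussPdf (c * x) s y)) := i2.sub (i1.const_mul (2 * μx))
      have ib : Integrable (fun y => 2 * μx * (Real.tanh y * gaussPdf (c * x) s y)) :=
        i1.const_mul (2 * μx)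
      have ic : Integrable (fun y => μx ^ 2 * gaussPdf (c * x) s y) := i0.const_mul (μx ^ 2)
      rw [MeasureTheory.integral_add ia ic,
        MeasureTheory.integral_sub i2 ib,
        MeasureTheory.integral_const_mul, MeasureTheory.integral_const_mul, hk1]
      ring
    nlinarith [h0, hexp]
  rw [hIx, hIneg]
  set e : ℝ := Real.exp (-(2 * x)) with hee
  have hepos : 0 < e := Real.exp_pos _
  have htm : 1 - e = Real.tanh x * (1 + e) := one_sub_exp_eq_tanh x
  have htm2 : (1 - e) * (μx - Real.tanh x) = Real.tanh x * (1 + e) * (μx - Real.tanh x) := by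
    rw [← htm]
  nlinarith [mul_nonneg (by positivity : (0:ℝ) ≤ 1 + e) (sub_nonneg.mpr hj),
    mul_nonneg (by positivity : (0:ℝ) ≤ 1 + e) (sq_nonneg (μx - Real.tanh x)), htm2]

/-- `mmse_u` is monotonically decreasing on `(0, ∞)`: for all
`0 < η₁ < η₂`, `mmse_u(η₂) ≤ mmse_u(η₁)`. -/
theorem mmseU_antitone (η₁ η₂ : ℝ) (h₁ : 0 < η₁) (h₁₂ : η₁ < η₂) :
    mmseU η₂ ≤ mmseU η₁ := by
  have h₂ : 0 < η₂ := h₁.trans h₁₂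
  -- integrability facts
  have hIPint : Integrable (fun x => Iint η₁ η₂ x * gaussPdf η₂ η₂ x) :=
    integrable_Iint_mul h₁ h₁₂
  have hIPneg : Integrable (fun x => Iint η₁ η₂ (-x) * Real.exp (-(2 * x)) * gaussPdf η₂ η₂ x) := by
    refine hIPint.comp_neg.congr (Filter.Eventually.of_forall fun x => ?_)
    show Iint η₁ η₂ (-x) * gaussPdf η₂ η₂ (-x) = _
    rw [gaussPdf_reflect h₂ x]; ring
  have hQint : Integrable (fun x => (1 - Real.tanh x) ^ 2 * gaussPdf η₂ η₂ x) :=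
    integrable_bdd_mul_gaussPdf continuous_one_sub_tanh_sq sq_one_sub_tanh_le _ h₂
  have hQneg : Integrable (fun x => (1 + Real.tanh x) ^ 2 * Real.exp (-(2 * x)) * gaussPdf η₂ η₂ x) := by
    refine hQint.comp_neg.congr (Filter.Eventually.of_forall fun x => ?_)
    show (1 - Real.tanh (-x)) ^ 2 * gaussPdf η₂ η₂ (-x) = _
    rw [Real.tanh_neg, gaussPdf_reflect h₂ x]; ring
  -- symmetrized forms
  have key2 : mmseU η₁ = ∫ x, (Iint η₁ η₂ x + Iint η₁ η₂ (-x) * Real.exp (-(2 * x))) / 2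
      * gaussPdf η₂ η₂ x := by
    have hsym := sym_integral h₂ (fun x => Iint η₁ η₂ x)
    have havg : (∫ x, (Iint η₁ η₂ x + Iint η₁ η₂ (-x) * Real.exp (-(2 * x))) / 2
        * gaussPdf η₂ η₂ x)
        = ((∫ x, Iint η₁ η₂ x * gaussPdf η₂ η₂ x)
          + ∫ x, Iint η₁ η₂ (-x) * Real.exp (-(2 * x)) * gaussPdf η₂ η₂ x) / 2 := by
      rw [← MeasureTheory.integral_add hIPint hIPneg, ← integral_div]
      congr 1; ext x; ring
    rw [mmseU_fubini h₁ h₁₂, havg, ← hsym]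
    ring
  have key3 : mmseU η₂ = ∫ x, ((1 - Real.tanh x) ^ 2
      + (1 + Real.tanh x) ^ 2 * Real.exp (-(2 * x))) / 2 * gaussPdf η₂ η₂ x := by
    have hsym := sym_integral h₂ (fun x => (1 - Real.tanh x) ^ 2)
    simp only [Real.tanh_neg, sub_neg_eq_add] at hsym
    have havg : (∫ x, ((1 - Real.tanh x) ^ 2
        + (1 + Real.tanh x) ^ 2 * Real.exp (-(2 * x))) / 2 * gaussPdf η₂ η₂ x)
        = ((∫ x, (1 - Real.tanh x) ^ 2 * gaussPdf η₂ η₂ x)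
          + ∫ x, (1 + Real.tanh x) ^ 2 * Real.exp (-(2 * x)) * gaussPdf η₂ η₂ x) / 2 := by
      rw [← MeasureTheory.integral_add hQint hQneg, ← integral_div]
      congr 1; ext x; ring
    have : mmseU η₂ = ∫ x, (1 - Real.tanh x) ^ 2 * gaussPdf η₂ η₂ x := rfl
    rw [this, havg, ← hsym]
    ring
  rw [key2, key3]
  refine MeasureTheory.integral_mono ?_ ?_ fun x => ?_
  · exact ((hQint.add hQneg).div_const 2).congr (Filter.Eventually.of_forall fun x => by
      show ((1 - Real.tanh x) ^ 2 * gaussPdf η₂ η₂ x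
        + (1 + Real.tanh x) ^ 2 * Real.exp (-(2 * x)) * gaussPdf η₂ η₂ x) / 2 = _
      ring)
  · exact ((hIPint.add hIPneg).div_const 2).congr (Filter.Eventually.of_forall fun x => by
      show (Iint η₁ η₂ x * gaussPdf η₂ η₂ x
        + Iint η₁ η₂ (-x) * Real.exp (-(2 * x)) * gaussPdf η₂ η₂ x) / 2 = _
      ring)
  · exact mul_le_mul_of_nonneg_right (core_ineq h₁ h₁₂ x) (gaussPdf_nonneg _ _ _)
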